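/- (Coercivity of the derivative of the logarithmic potential away from the mean value.) For every c ∈ (0,1) there exist constants C₀ > 0 and C₁ > 0 such that for all α ∈ (0,1), all m ∈ ℝ with |m| ≤ 1 + α − c, and all s ∈ (−1−α, 1+α), one has W'_{sg,α}(s)·(s − m) ≥ C₁·|W'_{sg,α}(s)| − C₀, where W'_{sg,α}(s) = α(log(1+α+s) − log(1+α−s)). -/
import Mathlib


open Filter Set

/-- The logarithmic potential `W_{sg,α}(s) = α((1+α+s)log(1+α+s) + (1+α−s)log(1+α−s))`.
(In Mathlib, `Real.log 0 = 0`, so the convention `0·log 0 = 0` holds automatically.) -/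
noncomputable def Wsg (α s : ℝ) : ℝ :=
  α * ((1 + α + s) * Real.log (1 + α + s) + (1 + α - s) * Real.log (1 + α - s))

/-- The first derivative `W'_{sg,α}(s) = α(log(1+α+s) − log(1+α−s))`. -/
noncomputable def Wsg' (α s : ℝ) : ℝ :=
  α * (Real.log (1 + α + s) - Real.log (1 + α - s))

/-- The second derivative `W''_{sg,α}(s) = α/(1+α+s) + α/(1+α−s)`. -/
noncomputable def Wsg'' (α s : ℝ) : ℝ :=
  α / (1 + α + s) + α / (1 + α - s)

/-- The third derivative `W'''_{sg,α}(s) = α/(1+α−s)² − α/(1+α+s)²`. -/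
noncomputable def Wsg''' (α s : ℝ) : ℝ :=
  α / (1 + α - s) ^ 2 - α / (1 + α + s) ^ 2

/-- **Coercivity of `W'_{sg,α}` away from the mean value.**
For every `c ∈ (0,1)` there exist `C₀ > 0`, `C₁ > 0` such that for all
`α ∈ (0,1)`, all `m` with `|m| ≤ 1 + α − c`, and all `s ∈ (−1−α, 1+α)`,
`W'_{sg,α}(s)·(s − m) ≥ C₁|W'_{sg,α}(s)| − C₀`. -/
theorem stmt_9 (c : ℝ) (hc : c ∈ Set.Ioo (0 : ℝ) 1) :
    ∃ C₀ : ℝ, 0 < C₀ ∧ ∃ C₁ : ℝ, 0 < C₁ ∧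
      ∀ α ∈ Set.Ioo (0 : ℝ) 1, ∀ m : ℝ, |m| ≤ 1 + α - c →
        ∀ s ∈ Set.Ioo (-(1 + α)) (1 + α),
          C₁ * |Wsg' α s| - C₀ ≤ Wsg' α s * (s - m) := by
  obtain ⟨hc0, hc1⟩ := hc
  have hlog : 0 < Real.log (8 / c) := Real.log_pos (by rw [lt_div_iff₀ hc0]; linarith)
  refine ⟨5 * Real.log (8 / c), by positivity, c / 2, by positivity, ?_⟩
  rintro α ⟨hα0, hα1⟩ m hm s ⟨hs1, hs2⟩
  obtain ⟨hm1, hm2⟩ := abs_le.1 hm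
  have hps : 0 < 1 + α + s := by linarith
  have hms : 0 < 1 + α - s := by linarith
  by_cases hcase : |s| ≤ 1 + α - c / 2
  · obtain ⟨hsl, hsu⟩ := abs_le.1 hcase
    have h1 : Real.log (1 + α + s) ≤ Real.log 4 :=
      Real.log_le_log hps (by linarith)
    have h2 : Real.log (1 + α - s) ≤ Real.log 4 :=
      Real.log_le_log hms (by linarith)
    have h3 : Real.log (c / 2) ≤ Real.log (1 + α + s) :=
      Real.log_le_log (by positivity) (by linarith)
    have h4 : Real.log (c / 2) ≤ Real.log (1 + α - s) :=
      Real.log_le_log (by positivity) (by linarith)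
    have hlogeq : Real.log (8 / c) = Real.log 4 - Real.log (c / 2) := by
      rw [Real.log_div (by norm_num) (ne_of_gt hc0),
        Real.log_div (ne_of_gt hc0) (by norm_num),
        show (8 : ℝ) = 4 * 2 by norm_num, Real.log_mul (by norm_num) (by norm_num)]
      ring
    have habs : |Wsg' α s| ≤ Real.log (8 / c) := by
      rw [Wsg', abs_mul, abs_of_pos hα0, hlogeq]
      have hd : |Real.log (1 + α + s) - Real.log (1 + α - s)| ≤
          Real.log 4 - Real.log (c / 2) := abs_le.2 ⟨by linarith, by linarith⟩
      nlinarith [abs_nonneg (Real.log (1 + α + s) - Real.log (1 + α - s))]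
    have hsm : |s - m| ≤ 4 := abs_le.2 ⟨by linarith, by linarith⟩
    have key : -(Real.log (8 / c) * 4) ≤ Wsg' α s * (s - m) := by
      have h5 : |Wsg' α s * (s - m)| ≤ Real.log (8 / c) * 4 := by
        rw [abs_mul]
        exact mul_le_mul habs hsm (abs_nonneg _) hlog.le
      have := neg_abs_le (Wsg' α s * (s - m))
      linarith
    nlinarith [abs_nonneg (Wsg' α s)]
  · push_neg at hcase
    rcases le_or_gt 0 s with hs0 | hs0
    · rw [abs_of_nonneg hs0] at hcase
      have hW : 0 ≤ Wsg' α s := by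
        rw [Wsg']
        have : Real.log (1 + α - s) ≤ Real.log (1 + α + s) :=
          Real.log_le_log hms (by linarith)
        nlinarith
      rw [abs_of_nonneg hW]
      have hsm : c / 2 ≤ s - m := by linarith
      nlinarith
    · rw [abs_of_neg hs0] at hcase
      have hW : Wsg' α s ≤ 0 := by
        rw [Wsg']
        have : Real.log (1 + α + s) ≤ Real.log (1 + α - s) :=
          Real.log_le_log hps (by linarith)
        nlinarith
      rw [abs_of_nonpos hW]
      have hsm : s - m ≤ -(c / 2) := by linarith
      nlinarith
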